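/- The dual Schrödinger objective F is convex on tuples of bounded measurable potentials, and it is strictly convex modulo translations: if φ = (φ_1,…,φ_J) and ψ = (ψ_1,…,ψ_J) are tuples of bounded measurable potentials with F((φ+ψ)/2) = (F(φ) + F(ψ))/2, then there exist real constants λ_1,…,λ_J with λ_1 + ⋯ + λ_J = 0 such that ψ_j = φ_j + λ_j holds μ_j-almost everywhere for every j. -/

import Mathlib

open MeasureTheory

lemma my_int_of_bdd {α : Type*} [MeasurableSpace α] (ν : Measure α) [IsFiniteMeasure ν]
    {f : α → ℝ} (hm : Measurable f) (hb : ∃ M, ∀ x, |f x| ≤ M) : Integrable f ν := by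
  obtain ⟨M, hM⟩ := hb
  exact (integrable_const M).mono' hm.aestronglyMeasurable
    (Filter.Eventually.of_forall fun x => by simpa [Real.norm_eq_abs] using hM x)

lemma my_exp_midpoint {a b : ℝ} (h : Real.exp ((a+b)/2) = (Real.exp a + Real.exp b)/2) :
    a = b := by
  by_contra hne
  have := strictConvexOn_exp.2 (Set.mem_univ a) (Set.mem_univ b) hne
    (by norm_num : (0:ℝ) < 1/2) (by norm_num : (0:ℝ) < 1/2) (by norm_num)
  simp only [smul_eq_mul] at this
  have h2 : (1:ℝ)/2 * a + 1/2 * b = (a+b)/2 := by ring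
  rw [h2, h] at this
  linarith

lemma my_prod_int {J : ℕ} {E : Fin J → Type*} [∀ j, MeasurableSpace (E j)]
    (μ : ∀ j, Measure (E j)) [∀ j, IsProbabilityMeasure (μ j)]
    (f : ∀ j, E j → ℝ) :
    ∫ x, ∏ j, f j (x j) ∂Measure.pi μ = ∏ j, ∫ x, f j x ∂μ j := by
  letI : ∀ j, MeasureSpace (E j) := fun j => ⟨μ j⟩
  haveI : ∀ j, SigmaFinite (volume : Measure (E j)) := fun j =>
    inferInstanceAs (SigmaFinite (μ j))
  exact MeasureTheory.integral_fintype_prod_eq_prod f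

lemma my_marg {J : ℕ} {E : Fin J → Type*} [∀ j, MeasurableSpace (E j)]
    (μ : ∀ j, Measure (E j)) [∀ j, IsProbabilityMeasure (μ j)]
    (j : Fin J) (f : E j → ℝ) :
    ∫ x, f (x j) ∂Measure.pi μ = ∫ x, f x ∂μ j := by
  classical
  set F : ∀ i, E i → ℝ := Function.update (fun i (_ : E i) => (1:ℝ)) j f with hF
  have h1 : ∀ x : ∀ i, E i, f (x j) = ∏ i, F i (x i) := by
    intro x
    rw [Finset.prod_eq_single j (fun i _ hij => by simp [hF, Function.update_of_ne hij])
      (fun h => absurd (Finset.mem_univ j) h)]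
    simp [hF]
  have h2 : ∏ i, ∫ x, F i x ∂μ i = ∫ x, f x ∂μ j := by
    rw [Finset.prod_eq_single j (fun i _ hij => by
        simp [hF, Function.update_of_ne hij])
      (fun h => absurd (Finset.mem_univ j) h)]
    simp [hF]
  calc ∫ x, f (x j) ∂Measure.pi μ = ∫ x, ∏ i, F i (x i) ∂Measure.pi μ := by
        simp_rw [h1]
    _ = ∏ i, ∫ x, F i x ∂μ i := my_prod_int μ F
    _ = _ := h2

lemma my_marg2 {J : ℕ} {E : Fin J → Type*} [∀ j, MeasurableSpace (E j)]
    (μ : ∀ j, Measure (E j)) [∀ j, IsProbabilityMeasure (μ j)]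
    {j k : Fin J} (hjk : j ≠ k) (f : E j → ℝ) (g : E k → ℝ) :
    ∫ x, f (x j) * g (x k) ∂Measure.pi μ = (∫ x, f x ∂μ j) * (∫ x, g x ∂μ k) := by
  classical
  set F : ∀ i, E i → ℝ :=
    Function.update (Function.update (fun i (_ : E i) => (1:ℝ)) j f) k g with hF
  have hFj : F j = f := by
    rw [hF, Function.update_of_ne hjk, Function.update_self]
  have hFk : F k = g := Function.update_self _ _ _
  have hFo : ∀ i, i ≠ j → i ≠ k → F i = fun _ => (1:ℝ) := by
    intro i hij hik
    rw [hF, Function.update_of_ne hik, Function.update_of_ne hij]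
  have h1 : ∀ x : ∀ i, E i, f (x j) * g (x k) = ∏ i, F i (x i) := by
    intro x
    rw [← Finset.prod_subset (Finset.subset_univ {j, k})
      (fun i _ hi => by
        simp only [Finset.mem_insert, Finset.mem_singleton, not_or] at hi
        simp [hFo i hi.1 hi.2]),
      Finset.prod_pair hjk, hFj, hFk]
  have h2 : ∏ i, ∫ x, F i x ∂μ i = (∫ x, f x ∂μ j) * (∫ x, g x ∂μ k) := by
    rw [← Finset.prod_subset (Finset.subset_univ {j, k})
      (fun i _ hi => by
        simp only [Finset.mem_insert, Finset.mem_singleton, not_or] at hi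
        simp [hFo i hi.1 hi.2]),
      Finset.prod_pair hjk, hFj, hFk]
  calc ∫ x, f (x j) * g (x k) ∂Measure.pi μ = ∫ x, ∏ i, F i (x i) ∂Measure.pi μ := by
        simp_rw [h1]
    _ = ∏ i, ∫ x, F i x ∂μ i := my_prod_int μ F
    _ = _ := h2

lemma my_ae_const_of_sum_eval {J : ℕ} {E : Fin J → Type*} [∀ j, MeasurableSpace (E j)]
    (μ : ∀ j, Measure (E j)) [∀ j, IsProbabilityMeasure (μ j)]
    (g : ∀ j, E j → ℝ) (hm : ∀ j, Measurable (g j)) (hb : ∀ j, ∃ M, ∀ x, |g j x| ≤ M)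
    (h : ∀ᵐ x ∂Measure.pi μ, (∑ j, g j (x j)) = 0) :
    (∑ j, ∫ x, g j x ∂μ j) = 0 ∧ ∀ j, g j =ᵐ[μ j] fun _ => ∫ x, g j x ∂μ j := by
  classical
  set m : Fin J → ℝ := fun j => ∫ x, g j x ∂μ j with hm_def
  have hint : ∀ j, Integrable (g j) (μ j) := fun j => my_int_of_bdd _ (hm j) (hb j)
  -- each coordinate evaluation is integrable wrt pi measure
  have hmeas_ev : ∀ j, Measurable fun x : ∀ i, E i => g j (x j) :=
    fun j => (hm j).comp (measurable_pi_apply j)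
  have hint_ev : ∀ j, Integrable (fun x : ∀ i, E i => g j (x j)) (Measure.pi μ) := by
    intro j
    obtain ⟨M, hM⟩ := hb j
    exact my_int_of_bdd _ (hmeas_ev j) ⟨M, fun x => hM (x j)⟩
  -- sum of means is zero
  have hsum0 : (∑ j, m j) = 0 := by
    have h1 : ∫ x, (∑ j, g j (x j)) ∂Measure.pi μ = 0 := by
      rw [integral_congr_ae (h.mono fun x hx => hx)]
      simp
    rw [integral_finset_sum _ (fun j _ => hint_ev j)] at h1
    simpa [my_marg μ] using h1
  refine ⟨hsum0, ?_⟩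
  -- centered functions
  set G : ∀ j, E j → ℝ := fun j x => g j x - m j with hG
  have hGm : ∀ j, Measurable (G j) := fun j => (hm j).sub measurable_const
  have hGb : ∀ j, ∃ M, ∀ x, |G j x| ≤ M := by
    intro j; obtain ⟨M, hM⟩ := hb j
    exact ⟨M + |m j|, fun x => by
      have := hM x
      have := abs_sub (g j x) (m j)
      calc |g j x - m j| ≤ |g j x| + |m j| := abs_sub _ _
        _ ≤ M + |m j| := by linarith⟩
  have hGint : ∀ j, Integrable (G j) (μ j) := fun j => my_int_of_bdd _ (hGm j) (hGb j)
  have hGmean : ∀ j, ∫ x, G j x ∂μ j = 0 := by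
    intro j
    rw [hG]
    simp [integral_sub (hint j) (integrable_const _), hm_def]
  -- sum of centered coordinate functions is a.e. 0
  have hs0 : ∀ᵐ x ∂Measure.pi μ, (∑ j, G j (x j)) = 0 := by
    filter_upwards [h] with x hx
    simp only [hG, Finset.sum_sub_distrib, hx, hsum0, sub_zero]
  -- integral of square
  have hsq_int : ∀ j k : Fin J, Integrable (fun x : ∀ i, E i => G j (x j) * G k (x k))
      (Measure.pi μ) := by
    intro j k
    obtain ⟨M1, h1⟩ := hGb j; obtain ⟨M2, h2⟩ := hGb k
    refine my_int_of_bdd _ (((hGm j).comp (measurable_pi_apply j)).mul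
      ((hGm k).comp (measurable_pi_apply k))) ⟨|M1| * |M2|, fun x => ?_⟩
    rw [abs_mul]
    exact mul_le_mul ((h1 _).trans (le_abs_self _)) ((h2 _).trans (le_abs_self _))
      (abs_nonneg _) (abs_nonneg _)
  have hsq : (∑ j, ∫ x, (G j x)^2 ∂μ j) = 0 := by
    have e1 : ∫ x, (∑ j, G j (x j)) * (∑ k, G k (x k)) ∂Measure.pi μ = 0 := by
      rw [integral_congr_ae ((hs0.mono fun x hx => by rw [hx, zero_mul]))]
      simp
    have e2 : ∫ x, (∑ j, G j (x j)) * (∑ k, G k (x k)) ∂Measure.pi μ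
        = ∑ j, ∑ k, ∫ x, G j (x j) * G k (x k) ∂Measure.pi μ := by
      simp_rw [Finset.sum_mul_sum]
      rw [integral_finset_sum _ (fun j _ => integrable_finset_sum _ (fun k _ => hsq_int j k))]
      exact Finset.sum_congr rfl fun j _ => integral_finset_sum _ (fun k _ => hsq_int j k)
    have e3 : ∀ j, ∑ k, ∫ x, G j (x j) * G k (x k) ∂Measure.pi μ
        = ∫ x, (G j x)^2 ∂μ j := by
      intro j
      rw [Finset.sum_eq_single j (fun k _ hkj => by
        rw [my_marg2 μ (Ne.symm hkj) (G j) (G k), hGmean k, mul_zero])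
        (fun hj => absurd (Finset.mem_univ j) hj)]
      have : ∀ x : ∀ i, E i, G j (x j) * G j (x j) = (fun y => (G j y)^2) (x j) := by
        intro x; ring
      rw [show (fun x : ∀ i, E i => G j (x j) * G j (x j))
          = fun x => (fun y => (G j y)^2) (x j) from funext this]
      exact my_marg μ j (fun y => (G j y)^2)
    rw [e2] at e1
    rw [← e1]
    exact (Finset.sum_congr rfl fun j _ => (e3 j).symm)
  -- each variance is zero
  have hvar : ∀ j, ∫ x, (G j x)^2 ∂μ j = 0 := by
    intro j
    have hnn : ∀ k ∈ Finset.univ, 0 ≤ ∫ x, (G k x)^2 ∂μ k :=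
      fun k _ => integral_nonneg fun x => sq_nonneg _
    exact (Finset.sum_eq_zero_iff_of_nonneg hnn).mp hsq j (Finset.mem_univ j)
  intro j
  have hGsq_int : Integrable (fun x => (G j x)^2) (μ j) := by
    obtain ⟨M, hM⟩ := hGb j
    refine my_int_of_bdd _ ((hGm j).pow_const 2) ⟨M^2, fun x => ?_⟩
    rw [abs_pow]
    exact pow_le_pow_left₀ (abs_nonneg _) (hM x) 2
  have := (integral_eq_zero_iff_of_nonneg (fun x => sq_nonneg (G j x)) hGsq_int).mp (hvar j)
  filter_upwards [this] with x hx
  have : G j x = 0 := by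
    have := hx
    simp only [Pi.zero_apply] at this
    exact pow_eq_zero_iff (n := 2) (by norm_num) |>.mp this
  have : g j x - m j = 0 := this
  linarith


/-- The dual Schrödinger objective
`F(φ) = -∑_j ∫ φ_j dμ_j + ε ∫ exp((∑_j φ_j(x_j) - c(x))/ε) d⊗μ_j - ε`. -/
noncomputable def dualObj {d J : ℕ}
    (X : Fin J → Set (Fin d → ℝ))
    (μ : (j : Fin J) → Measure (X j)) [∀ j, SigmaFinite (μ j)]
    (c : ((j : Fin J) → X j) → ℝ) (ε : ℝ)
    (φ : (j : Fin J) → X j → ℝ) : ℝ :=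
  -(∑ j, ∫ x, φ j x ∂(μ j)) +
    ε * ∫ x, Real.exp (((∑ j, φ j (x j)) - c x) / ε) ∂(Measure.pi μ) - ε

/-- A tuple of potentials is admissible if each component is bounded and measurable. -/
def BddMeasTuple {d J : ℕ} (X : Fin J → Set (Fin d → ℝ))
    (φ : (j : Fin J) → X j → ℝ) : Prop :=
  (∀ j, Measurable (φ j)) ∧ ∀ j, ∃ M, ∀ x, |φ j x| ≤ M

/-- The dual Schrödinger objective is convex on tuples of bounded
measurable potentials, and strictly convex modulo translations: equality in the
midpoint convexity inequality forces the two tuples of potentials to differ by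
constants `lam j` summing to zero, `μ j`-almost everywhere. -/
theorem dualObj_convex_and_strictly_convex_mod_translations
    {d J : ℕ} (hJ : 2 ≤ J)
    (X : Fin J → Set (Fin d → ℝ)) (hX : ∀ j, IsCompact (X j))
    (μ : (j : Fin J) → Measure (X j)) [∀ j, IsProbabilityMeasure (μ j)]
    (c : ((j : Fin J) → X j) → ℝ)
    (hc_cont : Continuous c) (hc_bdd : ∃ M, ∀ x, |c x| ≤ M)
    (ε : ℝ) (hε : 0 < ε) :
    (∀ (φ ψ : (j : Fin J) → X j → ℝ), BddMeasTuple X φ → BddMeasTuple X ψ →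
      ∀ t : ℝ, 0 ≤ t → t ≤ 1 →
        dualObj X μ c ε (fun j x => t * φ j x + (1 - t) * ψ j x) ≤
          t * dualObj X μ c ε φ + (1 - t) * dualObj X μ c ε ψ) ∧
    (∀ (φ ψ : (j : Fin J) → X j → ℝ), BddMeasTuple X φ → BddMeasTuple X ψ →
      dualObj X μ c ε (fun j x => (φ j x + ψ j x) / 2) =
        (dualObj X μ c ε φ + dualObj X μ c ε ψ) / 2 →
      ∃ lam : Fin J → ℝ, (∑ j, lam j) = 0 ∧
        ∀ j, ψ j =ᵐ[μ j] fun x => φ j x + lam j) := by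
  classical
  obtain ⟨Mc, hMc⟩ := hc_bdd
  have hcm : Measurable c := hc_cont.measurable
  -- integrability of the potentials
  have hζint : ∀ (ζ : (j : Fin J) → X j → ℝ), BddMeasTuple X ζ →
      ∀ j, Integrable (ζ j) (μ j) := by
    intro ζ hζ j
    exact my_int_of_bdd _ (hζ.1 j) (hζ.2 j)
  -- integrability of the exponential integrand
  have hEint : ∀ (ζ : (j : Fin J) → X j → ℝ), BddMeasTuple X ζ →
      Integrable (fun x : (j : Fin J) → X j =>
        Real.exp (((∑ j, ζ j (x j)) - c x) / ε)) (Measure.pi μ) := by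
    intro ζ hζ
    choose M hM using hζ.2
    have hmeas : Measurable fun x : (j : Fin J) → X j =>
        Real.exp (((∑ j, ζ j (x j)) - c x) / ε) :=
      Real.measurable_exp.comp
        (((Finset.measurable_sum _ fun j _ => (hζ.1 j).comp (measurable_pi_apply j)).sub
          hcm).div_const ε)
    refine my_int_of_bdd _ hmeas ⟨Real.exp (((∑ j, M j) + Mc) / ε), fun x => ?_⟩
    rw [abs_of_pos (Real.exp_pos _)]
    apply Real.exp_le_exp.mpr
    gcongr
    have h1 : (∑ j, ζ j (x j)) ≤ ∑ j, M j :=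
      Finset.sum_le_sum fun j _ => (abs_le.mp (hM j (x j))).2
    have h2 : -c x ≤ Mc := by have := (abs_le.mp (hMc x)).1; linarith
    linarith
  -- pointwise convexity of exp
  have hconv_pt : ∀ (a b t : ℝ), 0 ≤ t → t ≤ 1 →
      Real.exp (t * a + (1 - t) * b) ≤ t * Real.exp a + (1 - t) * Real.exp b := by
    intro a b t ht h1t
    have h1t' : (0:ℝ) ≤ 1 - t := by linarith
    have := convexOn_exp.2 (Set.mem_univ a) (Set.mem_univ b) ht h1t' (by ring)
    simpa only [smul_eq_mul] using this
  -- admissibility of convex combinations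
  have hcomb_adm : ∀ (φ ψ : (j : Fin J) → X j → ℝ), BddMeasTuple X φ → BddMeasTuple X ψ →
      ∀ t : ℝ, BddMeasTuple X (fun j x => t * φ j x + (1 - t) * ψ j x) := by
    intro φ ψ hφ hψ t
    refine ⟨fun j => ((hφ.1 j).const_mul t).add ((hψ.1 j).const_mul (1 - t)), fun j => ?_⟩
    obtain ⟨M1, h1⟩ := hφ.2 j
    obtain ⟨M2, h2⟩ := hψ.2 j
    refine ⟨|t| * M1 + |1 - t| * M2, fun x => ?_⟩
    calc |t * φ j x + (1 - t) * ψ j x| ≤ |t * φ j x| + |(1 - t) * ψ j x| := abs_add_le _ _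
      _ ≤ |t| * M1 + |1 - t| * M2 := by
          rw [abs_mul, abs_mul]
          exact add_le_add (mul_le_mul_of_nonneg_left (h1 x) (abs_nonneg t))
            (mul_le_mul_of_nonneg_left (h2 x) (abs_nonneg _))
  -- linear part of a convex combination
  have hlin : ∀ (φ ψ : (j : Fin J) → X j → ℝ), BddMeasTuple X φ → BddMeasTuple X ψ →
      ∀ t : ℝ,
      (∑ j, ∫ x, (t * φ j x + (1 - t) * ψ j x) ∂μ j)
        = t * (∑ j, ∫ x, φ j x ∂μ j) + (1 - t) * (∑ j, ∫ x, ψ j x ∂μ j) := by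
    intro φ ψ hφ hψ t
    have : ∀ j, ∫ x, (t * φ j x + (1 - t) * ψ j x) ∂μ j
        = t * ∫ x, φ j x ∂μ j + (1 - t) * ∫ x, ψ j x ∂μ j := by
      intro j
      rw [integral_add ((hζint φ hφ j).const_mul t) ((hζint ψ hψ j).const_mul (1 - t)),
        integral_const_mul, integral_const_mul]
    rw [Finset.sum_congr rfl fun j _ => this j, Finset.sum_add_distrib,
      ← Finset.mul_sum, ← Finset.mul_sum]
  -- exponential part of a convex combination
  have hexp_le : ∀ (φ ψ : (j : Fin J) → X j → ℝ), BddMeasTuple X φ → BddMeasTuple X ψ →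
      ∀ t : ℝ, 0 ≤ t → t ≤ 1 →
      ∫ x, Real.exp (((∑ j, (t * φ j (x j) + (1 - t) * ψ j (x j))) - c x) / ε) ∂Measure.pi μ ≤
        t * ∫ x, Real.exp (((∑ j, φ j (x j)) - c x) / ε) ∂Measure.pi μ +
        (1 - t) * ∫ x, Real.exp (((∑ j, ψ j (x j)) - c x) / ε) ∂Measure.pi μ := by
    intro φ ψ hφ hψ t ht h1t
    have hpt : ∀ x : (j : Fin J) → X j,
        Real.exp (((∑ j, (t * φ j (x j) + (1 - t) * ψ j (x j))) - c x) / ε) ≤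
          t * Real.exp (((∑ j, φ j (x j)) - c x) / ε) +
          (1 - t) * Real.exp (((∑ j, ψ j (x j)) - c x) / ε) := by
      intro x
      have hsum : (∑ j, (t * φ j (x j) + (1 - t) * ψ j (x j)))
          = t * (∑ j, φ j (x j)) + (1 - t) * (∑ j, ψ j (x j)) := by
        rw [Finset.sum_add_distrib, ← Finset.mul_sum, ← Finset.mul_sum]
      have harg : ((t * (∑ j, φ j (x j)) + (1 - t) * (∑ j, ψ j (x j))) - c x) / ε
          = t * (((∑ j, φ j (x j)) - c x) / ε) + (1 - t) * (((∑ j, ψ j (x j)) - c x) / ε) := by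
        ring
      rw [hsum, harg]
      exact hconv_pt _ _ t ht h1t
    calc ∫ x, Real.exp (((∑ j, (t * φ j (x j) + (1 - t) * ψ j (x j))) - c x) / ε) ∂Measure.pi μ
        ≤ ∫ x, (t * Real.exp (((∑ j, φ j (x j)) - c x) / ε) +
            (1 - t) * Real.exp (((∑ j, ψ j (x j)) - c x) / ε)) ∂Measure.pi μ :=
          integral_mono (by simpa using hEint _ (hcomb_adm φ ψ hφ hψ t))
            (((hEint φ hφ).const_mul t).add ((hEint ψ hψ).const_mul (1 - t))) hpt
      _ = _ := by
          rw [integral_add ((hEint φ hφ).const_mul t) ((hEint ψ hψ).const_mul (1 - t)),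
            integral_const_mul, integral_const_mul]
  constructor
  · -- convexity
    intro φ ψ hφ hψ t ht h1t
    simp only [dualObj]
    rw [hlin φ ψ hφ hψ t]
    have key := mul_le_mul_of_nonneg_left (hexp_le φ ψ hφ hψ t ht h1t) hε.le
    nlinarith [key]
  · -- strict convexity modulo translations
    intro φ ψ hφ hψ heq
    -- midpoint linear part
    have hlinmid : (∑ j, ∫ x, (φ j x + ψ j x) / 2 ∂μ j)
        = ((∑ j, ∫ x, φ j x ∂μ j) + (∑ j, ∫ x, ψ j x ∂μ j)) / 2 := by
      have : ∀ j, ∫ x, (φ j x + ψ j x) / 2 ∂μ j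
          = ((∫ x, φ j x ∂μ j) + ∫ x, ψ j x ∂μ j) / 2 := by
        intro j
        rw [integral_div, integral_add (hζint φ hφ j) (hζint ψ hψ j)]
      rw [Finset.sum_congr rfl fun j _ => this j, ← Finset.sum_div, Finset.sum_add_distrib]
    have hmid_adm : BddMeasTuple X (fun j x => (φ j x + ψ j x) / 2) := by
      refine ⟨fun j => ((hφ.1 j).add (hψ.1 j)).div_const 2, fun j => ?_⟩
      obtain ⟨M1, h1⟩ := hφ.2 j
      obtain ⟨M2, h2⟩ := hψ.2 j
      exact ⟨(M1 + M2) / 2, fun x => by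
        have h := (abs_add_le (φ j x) (ψ j x)).trans (add_le_add (h1 x) (h2 x))
        rw [abs_div, abs_two]
        linarith⟩
    have hEmid_int : Integrable (fun x : (j : Fin J) → X j =>
        Real.exp (((∑ j, (φ j (x j) + ψ j (x j)) / 2) - c x) / ε)) (Measure.pi μ) := by
      simpa using hEint _ hmid_adm
    -- equality of exponential integrals
    have hIeq : ∫ x, Real.exp (((∑ j, (φ j (x j) + ψ j (x j)) / 2) - c x) / ε) ∂Measure.pi μ
        = ((∫ x, Real.exp (((∑ j, φ j (x j)) - c x) / ε) ∂Measure.pi μ) +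
            ∫ x, Real.exp (((∑ j, ψ j (x j)) - c x) / ε) ∂Measure.pi μ) / 2 := by
      simp only [dualObj] at heq
      rw [hlinmid] at heq
      apply mul_left_cancel₀ hε.ne'
      linarith
    -- the nonnegative defect
    have hptmid : ∀ x : (j : Fin J) → X j,
        ((∑ j, (φ j (x j) + ψ j (x j)) / 2) - c x) / ε
          = (((((∑ j, φ j (x j)) - c x) / ε) + (((∑ j, ψ j (x j)) - c x) / ε)) / 2) := by
      intro x
      rw [← Finset.sum_div, Finset.sum_add_distrib]
      ring
    have hDnn : ∀ x : (j : Fin J) → X j,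
        0 ≤ (Real.exp (((∑ j, φ j (x j)) - c x) / ε) +
              Real.exp (((∑ j, ψ j (x j)) - c x) / ε)) / 2 -
            Real.exp (((∑ j, (φ j (x j) + ψ j (x j)) / 2) - c x) / ε) := by
      intro x
      have h := hconv_pt (((∑ j, φ j (x j)) - c x) / ε) (((∑ j, ψ j (x j)) - c x) / ε)
        (1/2) (by norm_num) (by norm_num)
      rw [hptmid x]
      have harg : ((((∑ j, φ j (x j)) - c x) / ε) + (((∑ j, ψ j (x j)) - c x) / ε)) / 2
          = (1:ℝ)/2 * (((∑ j, φ j (x j)) - c x) / ε) +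
            (1 - 1/2) * (((∑ j, ψ j (x j)) - c x) / ε) := by ring
      rw [harg]
      linarith
    have hDint : Integrable (fun x : (j : Fin J) → X j =>
        (Real.exp (((∑ j, φ j (x j)) - c x) / ε) +
          Real.exp (((∑ j, ψ j (x j)) - c x) / ε)) / 2 -
        Real.exp (((∑ j, (φ j (x j) + ψ j (x j)) / 2) - c x) / ε)) (Measure.pi μ) :=
      (((hEint φ hφ).add (hEint ψ hψ)).div_const 2).sub hEmid_int
    have hDzero : ∫ x, ((Real.exp (((∑ j, φ j (x j)) - c x) / ε) +
          Real.exp (((∑ j, ψ j (x j)) - c x) / ε)) / 2 -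
        Real.exp (((∑ j, (φ j (x j) + ψ j (x j)) / 2) - c x) / ε)) ∂Measure.pi μ = 0 := by
      have hint1 : Integrable (fun x : (j : Fin J) → X j =>
          (Real.exp (((∑ j, φ j (x j)) - c x) / ε) +
            Real.exp (((∑ j, ψ j (x j)) - c x) / ε)) / 2) (Measure.pi μ) :=
        ((hEint φ hφ).add (hEint ψ hψ)).div_const 2
      rw [integral_sub hint1 hEmid_int, integral_div,
        integral_add (hEint φ hφ) (hEint ψ hψ), hIeq]
      ring
    have hae := (integral_eq_zero_iff_of_nonneg hDnn hDint).mp hDzero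
    -- a.e. equality of the coordinate sums
    have hSae : ∀ᵐ x ∂Measure.pi μ, (∑ j, (ψ j (x j) - φ j (x j))) = 0 := by
      filter_upwards [hae] with x hx
      simp only [Pi.zero_apply] at hx
      have hmid : Real.exp (((((∑ j, φ j (x j)) - c x) / ε) +
          (((∑ j, ψ j (x j)) - c x) / ε)) / 2)
          = (Real.exp (((∑ j, φ j (x j)) - c x) / ε) +
              Real.exp (((∑ j, ψ j (x j)) - c x) / ε)) / 2 := by
        rw [← hptmid x]
        linarith
      have heqab := my_exp_midpoint hmid
      have h2 : (∑ j, φ j (x j)) = (∑ j, ψ j (x j)) := by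
        field_simp [hε.ne'] at heqab
        linarith
      rw [Finset.sum_sub_distrib]
      linarith
    -- apply the decoupling lemma
    obtain ⟨hsum0, hconst⟩ := my_ae_const_of_sum_eval μ (fun j x => ψ j x - φ j x)
      (fun j => (hψ.1 j).sub (hφ.1 j))
      (fun j => by
        obtain ⟨M1, h1⟩ := hφ.2 j
        obtain ⟨M2, h2⟩ := hψ.2 j
        exact ⟨M2 + M1, fun x => (abs_sub _ _).trans (add_le_add (h2 x) (h1 x))⟩)
      hSae
    refine ⟨fun j => ∫ x, (ψ j x - φ j x) ∂μ j, hsum0, fun j => ?_⟩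
    filter_upwards [hconst j] with x hx
    have hx' : ψ j x - φ j x = ∫ x, (ψ j x - φ j x) ∂μ j := hx
    linarith
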